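/- Let p_n(x) be the characteristic polynomial of the n×n affine Cartan matrix of type C_{n-1}^{(1)} (tridiagonal with 2 on the diagonal, entries -2, -1, …, -1 on the superdiagonal ordered so that C_{1,2} = -2 and C_{n,n-1} = -2, and -1 elsewhere on the sub/super diagonals). Then p_n(x) = x(x-4) ∑_{j=0}^{n-2} (-1)^{n+j} C(n+j-1, 2j+1) x^j. -/

import Mathlib

open Polynomial Matrix Finset


lemma chid (a c : ℕ) : (a+2).choose (c+2) + a.choose (c+2)
    = 2 * (a+1).choose (c+2) + a.choose c := by
  have h1 : (a+2).choose (c+2) = (a+1).choose (c+1) + (a+1).choose (c+2) :=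
    Nat.choose_succ_succ (a+1) (c+1)
  have h2 : (a+1).choose (c+1) = a.choose c + a.choose (c+1) := Nat.choose_succ_succ a c
  have h3 : (a+1).choose (c+2) = a.choose (c+1) + a.choose (c+2) :=
    Nat.choose_succ_succ a (c+1)
  omega

noncomputable def Tsum (y : ℝ) (k : ℕ) : ℝ :=
  ∑ j ∈ Finset.range k, ((k+j).choose (2*j+1) : ℝ) * y^j

lemma Tsum_ext (y : ℝ) (k N : ℕ) (h : k ≤ N) :
    ∑ j ∈ Finset.range N, ((k+j).choose (2*j+1) : ℝ) * y^j = Tsum y k := by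
  rw [Tsum]
  symm
  apply Finset.sum_subset (Finset.range_subset_range.mpr h)
  intro j hj hj'
  simp only [Finset.mem_range, not_lt] at hj'
  have : (k+j).choose (2*j+1) = 0 := Nat.choose_eq_zero_of_lt (by omega)
  simp [this]

lemma Tlem (y : ℝ) (k : ℕ) :
    Tsum y (k+2) + Tsum y k = (2+y) * Tsum y (k+1) := by
  set G : ℕ → ℝ := fun j => if j = 0 then 0 else ((k+j).choose (2*j-1) : ℝ) * y^j with hG
  have key : ∑ j ∈ Finset.range (k+2), ((k+1+j).choose (2*j+1):ℝ) * y^(j+1)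
      = ∑ j ∈ Finset.range (k+2), G j := by
    have h3 : G (k+2) = 0 := by
      have : (k+(k+2)).choose (2*(k+2)-1) = 0 := Nat.choose_eq_zero_of_lt (by omega)
      simp [hG, this]
    have h4 : ∀ i : ℕ, G (i+1) = ((k+1+i).choose (2*i+1):ℝ) * y^(i+1) := by
      intro i
      simp only [hG, if_neg (by omega : ¬ (i+1 = 0))]
      rw [show k+(i+1) = k+1+i by omega, show 2*(i+1)-1 = 2*i+1 by omega]
    calc ∑ j ∈ Finset.range (k+2), ((k+1+j).choose (2*j+1):ℝ) * y^(j+1)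
        = ∑ j ∈ Finset.range (k+2), G (j+1) :=
          Finset.sum_congr rfl fun j _ => (h4 j).symm
      _ = (∑ j ∈ Finset.range (k+2), G (j+1)) + G 0 := by simp [hG]
      _ = ∑ j ∈ Finset.range (k+3), G j := (Finset.sum_range_succ' G (k+2)).symm
      _ = (∑ j ∈ Finset.range (k+2), G j) + G (k+2) := Finset.sum_range_succ G (k+2)
      _ = ∑ j ∈ Finset.range (k+2), G j := by rw [h3, add_zero]
  rw [← Tsum_ext y (k+2) (k+2) le_rfl, ← Tsum_ext y k (k+2) (by omega),
    ← Tsum_ext y (k+1) (k+2) (by omega)]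
  rw [← Finset.sum_add_distrib]
  have step : ∀ j ∈ Finset.range (k+2),
      ((k+2+j).choose (2*j+1):ℝ) * y^j + ((k+j).choose (2*j+1):ℝ) * y^j
      = 2 * (((k+1+j).choose (2*j+1):ℝ) * y^j) + G j := by
    intro j _
    cases j with
    | zero =>
      simp only [hG, if_pos rfl]
      push_cast [Nat.choose_one_right]
      ring
    | succ i =>
      have hc : (((k+i+1)+2).choose ((2*i+1)+2) : ℝ) + ((k+i+1).choose ((2*i+1)+2) : ℝ)
          = 2 * (((k+i+1)+1).choose ((2*i+1)+2) : ℝ) + ((k+i+1).choose (2*i+1) : ℝ) := by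
        exact_mod_cast congrArg (Nat.cast (R := ℝ)) (chid (k+i+1) (2*i+1))
      simp only [hG, if_neg (by omega : ¬ (i+1 = 0))]
      rw [show 2*(i+1)-1 = 2*i+1 by omega, show k+2+(i+1) = (k+i+1)+2 by omega,
        show 2*(i+1)+1 = (2*i+1)+2 by omega, show k+(i+1) = k+i+1 by omega,
        show k+1+(i+1) = (k+i+1)+1 by omega]
      linear_combination y^(i+1) * hc
  rw [Finset.sum_congr rfl step, Finset.sum_add_distrib, ← key]
  have hy : ∑ j ∈ Finset.range (k+2), ((k+1+j).choose (2*j+1):ℝ) * y^(j+1)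
      = y * ∑ j ∈ Finset.range (k+2), ((k+1+j).choose (2*j+1):ℝ) * y^j := by
    rw [Finset.mul_sum]; exact Finset.sum_congr rfl fun j _ => by ring
  rw [hy, ← Finset.mul_sum]
  ring


noncomputable def Ssum (x : ℝ) (k : ℕ) : ℝ :=
  ∑ j ∈ Finset.range k, (-1:ℝ)^(k+1+j) * ((k+j).choose (2*j+1) : ℝ) * x^j

lemma Ssum_eq (x : ℝ) (k : ℕ) : Ssum x k = (-1:ℝ)^(k+1) * Tsum (-x) k := by
  rw [Ssum, Tsum, Finset.mul_sum]
  refine Finset.sum_congr rfl fun j _ => ?_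
  rw [pow_add, neg_pow]
  ring

lemma Srec (x : ℝ) (k : ℕ) : Ssum x (k+2) = (x-2) * Ssum x (k+1) - Ssum x k := by
  rw [Ssum_eq, Ssum_eq, Ssum_eq]
  have h := Tlem (-x) k
  linear_combination ((-1:ℝ)^(k+1)) * h

noncomputable def Fs (x : ℝ) : ℕ → ℝ
  | 0 => 2
  | 1 => x - 2
  | (k+2) => (x-2) * Fs x (k+1) - Fs x k

lemma Ssum_two (x : ℝ) : Ssum x 2 = x - 2 := by
  rw [Ssum]
  rw [Finset.sum_range_succ, Finset.sum_range_succ, Finset.sum_range_zero]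
  norm_num
  ring

lemma Ssum_three (x : ℝ) : Ssum x 3 = x^2 - 4*x + 3 := by
  rw [Ssum]
  rw [Finset.sum_range_succ, Finset.sum_range_succ, Finset.sum_range_succ,
    Finset.sum_range_zero]
  norm_num [Nat.choose]
  ring

lemma alg (x : ℝ) : ∀ m : ℕ, (x-2) * Fs x (m+2) - 2 * Fs x (m+1) = x*(x-4) * Ssum x (m+2) := by
  have key : ∀ m : ℕ,
      ((x-2) * Fs x (m+2) - 2 * Fs x (m+1) = x*(x-4) * Ssum x (m+2)) ∧
      ((x-2) * Fs x (m+3) - 2 * Fs x (m+2) = x*(x-4) * Ssum x (m+3)) := by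
    intro m
    induction m with
    | zero =>
      constructor
      · show (x-2) * Fs x 2 - 2 * Fs x 1 = x*(x-4) * Ssum x 2
        rw [Ssum_two, show Fs x 2 = (x-2)*(x-2) - 2 from rfl, show Fs x 1 = x - 2 from rfl]
        ring
      · show (x-2) * Fs x 3 - 2 * Fs x 2 = x*(x-4) * Ssum x 3
        rw [Ssum_three, show Fs x 3 = (x-2)*((x-2)*(x-2)-2) - (x-2) from rfl,
          show Fs x 2 = (x-2)*(x-2) - 2 from rfl]
        ring
    | succ m ih =>
      refine ⟨ih.2, ?_⟩
      have hF : Fs x (m+4) = (x-2) * Fs x (m+3) - Fs x (m+2) := rfl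
      have hS := Srec x (m+2)
      have h1 := ih.1
      have h2 := ih.2
      show (x-2) * Fs x (m+4) - 2 * Fs x (m+3) = x*(x-4) * Ssum x (m+4)
      have hF3 : Fs x (m+3) = (x-2) * Fs x (m+2) - Fs x (m+1) := rfl
      rw [hF, hS]
      linear_combination (x-2) * h2 - h1 - 2 * hF3
  exact fun m => (key m).1

noncomputable def Fm (x : ℝ) (k : ℕ) : Matrix (Fin k) (Fin k) ℝ :=
  Matrix.of fun i j =>
    if (i:ℕ) = (j:ℕ) then x - 2
    else if (i:ℕ) = k - 1 ∧ (j:ℕ) = k - 2 then 2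
    else if (i:ℕ) + 1 = (j:ℕ) ∨ (j:ℕ) + 1 = (i:ℕ) then 1
    else 0

lemma det_row01 {m : ℕ} (M : Matrix (Fin (m+3)) (Fin (m+3)) ℝ)
    (h0 : ∀ j : Fin (m+1), M 0 j.succ.succ = 0) :
    M.det = M 0 0 * (M.submatrix Fin.succ (Fin.succAbove 0)).det
      - M 0 1 * (M.submatrix Fin.succ (Fin.succAbove 1)).det := by
  rw [Matrix.det_succ_row_zero, Fin.sum_univ_succ, Fin.sum_univ_succ]
  simp [h0, Fin.succ_zero_eq_one]
  ring

lemma det_col0 {m : ℕ} (M : Matrix (Fin (m+1)) (Fin (m+1)) ℝ)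
    (h0 : ∀ i : Fin m, M i.succ 0 = 0) :
    M.det = M 0 0 * (M.submatrix Fin.succ Fin.succ).det := by
  rw [Matrix.det_succ_column_zero, Fin.sum_univ_succ]
  simp [h0, Fin.succAbove_zero]

lemma Fm_entry00 (x : ℝ) (k : ℕ) : Fm x (k+3) 0 0 = x - 2 := by
  simp [Fm]

lemma Fm_entry01 (x : ℝ) (k : ℕ) : Fm x (k+3) 0 1 = 1 := by
  have h1 : ((1 : Fin (k+3)) : ℕ) = 1 := rfl
  simp only [Fm, Matrix.of_apply, h1, Fin.val_zero]
  split_ifs <;> first | rfl | omega | (exfalso; omega) | (exfalso; tauto) | (simp_all <;> omega) | simp_all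

lemma Fm_entry0s (x : ℝ) (k : ℕ) (j : Fin (k+1)) : Fm x (k+3) 0 j.succ.succ = 0 := by
  have : ((j.succ.succ : Fin (k+3)) : ℕ) = (j:ℕ) + 2 := rfl
  simp only [Fm, Matrix.of_apply, this, Fin.val_zero]
  have hj := j.isLt
  split_ifs <;> first | rfl | omega | (exfalso; omega) | (exfalso; tauto) | (simp_all <;> omega) | simp_all

lemma Fm_sub0 (x : ℝ) (k : ℕ) :
    (Fm x (k+3)).submatrix Fin.succ (Fin.succAbove 0) = Fm x (k+2) := by
  ext i j
  have hi := i.isLt; have hj := j.isLt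
  simp only [Matrix.submatrix_apply, Fin.succAbove_zero, Fm, Matrix.of_apply, Fin.val_succ]
  split_ifs <;> first | rfl | omega | (exfalso; omega) | (exfalso; tauto) | (simp_all <;> omega) | simp_all

lemma Fm_minor1_col (x : ℝ) (k : ℕ) (i : Fin (k+1)) :
    ((Fm x (k+3)).submatrix Fin.succ (Fin.succAbove 1)) i.succ 0 = 0 := by
  have h1 : (1 : Fin (k+3)).succAbove 0 = 0 := by
    have := Fin.succ_succAbove_zero (0 : Fin (k+2))
    simpa using this
  simp only [Matrix.submatrix_apply, h1]
  have hi := i.isLt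
  simp only [Fm, Matrix.of_apply, Fin.val_succ, Fin.val_zero]
  split_ifs <;> first | rfl | omega | (exfalso; omega) | (exfalso; tauto) | (simp_all <;> omega) | simp_all

lemma Fm_minor1_00 (x : ℝ) (k : ℕ) :
    ((Fm x (k+3)).submatrix Fin.succ (Fin.succAbove 1)) 0 0 = 1 := by
  have h1 : (1 : Fin (k+3)).succAbove 0 = 0 := by
    have := Fin.succ_succAbove_zero (0 : Fin (k+2))
    simpa using this
  simp only [Matrix.submatrix_apply, h1]
  simp only [Fm, Matrix.of_apply, Fin.val_succ, Fin.val_zero]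
  split_ifs <;> first | rfl | omega | (exfalso; omega) | (exfalso; tauto) | (simp_all <;> omega) | simp_all

lemma Fm_minor1_inner (x : ℝ) (k : ℕ) :
    (((Fm x (k+3)).submatrix Fin.succ (Fin.succAbove 1)).submatrix Fin.succ Fin.succ)
      = Fm x (k+1) := by
  ext i j
  have h1 : (1 : Fin (k+3)).succAbove j.succ = j.succ.succ := by
    have := Fin.succ_succAbove_succ (0 : Fin (k+2)) j
    simpa [Fin.succAbove_zero] using this
  have hi := i.isLt; have hj := j.isLt
  simp only [Matrix.submatrix_apply, h1, Fm, Matrix.of_apply, Fin.val_succ]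
  split_ifs <;> first | rfl | omega | (exfalso; omega) | (exfalso; tauto) | (simp_all <;> omega) | simp_all

lemma Fm_rec (x : ℝ) (k : ℕ) :
    (Fm x (k+3)).det = (x-2) * (Fm x (k+2)).det - (Fm x (k+1)).det := by
  rw [det_row01 (Fm x (k+3)) (Fm_entry0s x k), Fm_entry00, Fm_entry01, Fm_sub0]
  have hcol := det_col0 ((Fm x (k+3)).submatrix Fin.succ (Fin.succAbove 1))
    (Fm_minor1_col x k)
  rw [hcol, Fm_minor1_00, Fm_minor1_inner]
  ring

lemma Fm_det (x : ℝ) : ∀ k : ℕ, (Fm x (k+1)).det = Fs x (k+1) := by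
  have key : ∀ k : ℕ, (Fm x (k+1)).det = Fs x (k+1) ∧ (Fm x (k+2)).det = Fs x (k+2) := by
    intro k
    induction k with
    | zero =>
      constructor
      · rw [Matrix.det_fin_one]
        show Fm x 1 0 0 = x - 2
        simp [Fm]
      · rw [Matrix.det_fin_two]
        have e00 : Fm x 2 0 0 = x - 2 := by simp [Fm]
        have e11 : Fm x 2 1 1 = x - 2 := by simp [Fm]
        have e01 : Fm x 2 0 1 = 1 := by
          simp only [Fm, Matrix.of_apply]
          norm_num
        have e10 : Fm x 2 1 0 = 2 := by
          simp only [Fm, Matrix.of_apply]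
          norm_num
        rw [e00, e11, e01, e10]
        show (x-2)*(x-2) - 1*2 = (x-2)*(x-2) - 2
        ring
    | succ k ih =>
      refine ⟨ih.2, ?_⟩
      have := Fm_rec x k
      rw [ih.1, ih.2] at this
      rw [this]
      rfl
  exact fun k => (key k).1

noncomputable def Dmat (x : ℝ) (n : ℕ) : Matrix (Fin n) (Fin n) ℝ :=
  Matrix.of fun i j =>
    if i = j then x - 2
    else if (i:ℕ) = 0 ∧ (j:ℕ) = 1 then 2
    else if (i:ℕ) = n - 1 ∧ (j:ℕ) = n - 2 then 2
    else if (i:ℕ) + 1 = (j:ℕ) ∨ (j:ℕ) + 1 = (i:ℕ) then 1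
    else 0

lemma Dmat_entry00 (x : ℝ) (k : ℕ) : Dmat x (k+3) 0 0 = x - 2 := by simp [Dmat]

lemma Dmat_entry01 (x : ℝ) (k : ℕ) : Dmat x (k+3) 0 1 = 2 := by
  have h1 : ((1 : Fin (k+3)) : ℕ) = 1 := rfl
  have h2 : (0 : Fin (k+3)) ≠ 1 := by
    intro h
    have := congrArg Fin.val h
    simp [h1] at this
  simp only [Dmat, Matrix.of_apply, h1, Fin.val_zero, if_neg h2]
  norm_num

lemma Dmat_entry0s (x : ℝ) (k : ℕ) (j : Fin (k+1)) : Dmat x (k+3) 0 j.succ.succ = 0 := by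
  have hv : ((j.succ.succ : Fin (k+3)) : ℕ) = (j:ℕ) + 2 := rfl
  have h2 : (0 : Fin (k+3)) ≠ j.succ.succ := by
    intro h
    have := congrArg Fin.val h
    simp [hv] at this
  simp only [Dmat, Matrix.of_apply, hv, Fin.val_zero, if_neg h2]
  have hj := j.isLt
  split_ifs <;> first | rfl | omega | (exfalso; omega) | (exfalso; tauto) | (simp_all <;> omega) | simp_all

lemma Dmat_sub0 (x : ℝ) (k : ℕ) :
    (Dmat x (k+3)).submatrix Fin.succ (Fin.succAbove 0) = Fm x (k+2) := by
  ext i j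
  have hi := i.isLt; have hj := j.isLt
  have hij : (Fin.succ i = Fin.succ j) ↔ ((i:ℕ) = (j:ℕ)) := by
    rw [Fin.succ_inj, Fin.ext_iff]
  simp only [Matrix.submatrix_apply, Fin.succAbove_zero, Dmat, Fm, Matrix.of_apply,
    Fin.val_succ, hij]
  split_ifs <;> first | rfl | omega | (exfalso; omega) | (exfalso; tauto) | (simp_all <;> omega) | simp_all

lemma Dmat_minor1_col (x : ℝ) (k : ℕ) (i : Fin (k+1)) :
    ((Dmat x (k+3)).submatrix Fin.succ (Fin.succAbove 1)) i.succ 0 = 0 := by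
  have h1 : (1 : Fin (k+3)).succAbove 0 = 0 := by
    simpa using Fin.succ_succAbove_zero (0 : Fin (k+2))
  simp only [Matrix.submatrix_apply, h1]
  have hi := i.isLt
  have hne : i.succ.succ ≠ (0 : Fin (k+3)) := by
    intro h
    have := congrArg Fin.val h
    simp at this
  simp only [Dmat, Matrix.of_apply, Fin.val_succ, Fin.val_zero, if_neg hne]
  split_ifs <;> first | rfl | omega | (exfalso; omega) | (exfalso; tauto) | (simp_all <;> omega) | simp_all

lemma Dmat_minor1_00 (x : ℝ) (k : ℕ) :
    ((Dmat x (k+3)).submatrix Fin.succ (Fin.succAbove 1)) 0 0 = 1 := by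
  have h1 : (1 : Fin (k+3)).succAbove 0 = 0 := by
    simpa using Fin.succ_succAbove_zero (0 : Fin (k+2))
  simp only [Matrix.submatrix_apply, h1]
  have hne : Fin.succ (0 : Fin (k+2)) ≠ (0 : Fin (k+3)) := by
    intro h
    have := congrArg Fin.val h
    simp at this
  simp only [Dmat, Matrix.of_apply, Fin.val_succ, Fin.val_zero, if_neg hne]
  split_ifs <;> first | rfl | omega | (exfalso; omega) | (exfalso; tauto) | (simp_all <;> omega) | simp_all

lemma Dmat_minor1_inner (x : ℝ) (k : ℕ) :
    (((Dmat x (k+3)).submatrix Fin.succ (Fin.succAbove 1)).submatrix Fin.succ Fin.succ)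
      = Fm x (k+1) := by
  ext i j
  have h1 : (1 : Fin (k+3)).succAbove j.succ = j.succ.succ := by
    simpa [Fin.succAbove_zero] using Fin.succ_succAbove_succ (0 : Fin (k+2)) j
  have hi := i.isLt; have hj := j.isLt
  have hij : (i.succ.succ = j.succ.succ) ↔ ((i:ℕ) = (j:ℕ)) := by
    rw [Fin.succ_inj, Fin.succ_inj, Fin.ext_iff]
  simp only [Matrix.submatrix_apply, h1, Dmat, Fm, Matrix.of_apply, Fin.val_succ, hij]
  split_ifs <;> first | rfl | omega | (exfalso; omega) | (exfalso; tauto) | (simp_all <;> omega) | simp_all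

lemma Dmat_det (x : ℝ) (k : ℕ) :
    (Dmat x (k+3)).det = (x-2) * Fs x (k+2) - 2 * Fs x (k+1) := by
  rw [det_row01 (Dmat x (k+3)) (Dmat_entry0s x k), Dmat_entry00, Dmat_entry01, Dmat_sub0]
  have hcol := det_col0 ((Dmat x (k+3)).submatrix Fin.succ (Fin.succAbove 1))
    (Dmat_minor1_col x k)
  rw [hcol, Dmat_minor1_00, Dmat_minor1_inner, Fm_det x (k+1), Fm_det x k]
  ring

lemma eval_charpoly {n : ℕ} (M : Matrix (Fin n) (Fin n) ℝ) (x : ℝ) :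
    (M.charpoly).eval x = (Matrix.of fun i j => (if i = j then x else 0) - M i j).det := by
  rw [Matrix.charpoly, ← Polynomial.coe_evalRingHom, RingHom.map_det]
  congr 1
  ext i j
  by_cases h : i = j
  · subst h
    simp [Matrix.charmatrix_apply_eq]
  · simp [Matrix.charmatrix_apply_ne _ _ _ h, h]

theorem charpoly_affine_cartan_C (n : ℕ) (hn : 3 ≤ n) (x : ℝ) :
    ((Matrix.of fun i j : Fin n =>
      if i = j then (2 : ℝ)
      else if i.val = 0 ∧ j.val = 1 then -2
      else if i.val = n - 1 ∧ j.val = n - 2 then -2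
      else if i.val + 1 = j.val ∨ j.val + 1 = i.val then -1
      else 0).charpoly).eval x =
    x * (x - 4) * ∑ j ∈ Finset.range (n - 1),
      (-1 : ℝ) ^ (n + j) * (Nat.choose (n + j - 1) (2 * j + 1)) * x ^ j := by
  obtain ⟨m, rfl⟩ : ∃ m, n = m + 3 := ⟨n - 3, by omega⟩
  have h1 : ((Matrix.of fun i j : Fin (m+3) =>
      if i = j then (2 : ℝ)
      else if i.val = 0 ∧ j.val = 1 then -2
      else if i.val = m + 3 - 1 ∧ j.val = m + 3 - 2 then -2
      else if i.val + 1 = j.val ∨ j.val + 1 = i.val then -1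
      else 0).charpoly).eval x = (Dmat x (m+3)).det := by
    rw [eval_charpoly]
    congr 1
    ext i j
    simp only [Matrix.of_apply, Dmat]
    split_ifs <;> norm_num
  rw [h1, Dmat_det, alg x m]
  congr 1
  rw [Ssum]
  refine Finset.sum_congr (by norm_num) fun j _ => ?_
  rw [show m+3+j-1 = m+2+j by omega, show m+3+j = m+2+1+j by omega]
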